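/- Let A, B, C be non-negative real numbers with A ∈ (0,1). If a sequence of non-negative numbers {x_k}_{k≥0} satisfies x_{k+1}² ≤ [(1 − A)x_k + C]² + B² for every integer k ≥ 0, then for all integers k ≥ 0, x_k ≤ (1 − A)^k x₀ + C/A + B²/(C + √A · B). -/

import Mathlib

/-- **Lemma (recursive inequality).** Let `A, B, C` be non-negative real numbers with
`A ∈ (0,1)`. If a sequence of non-negative numbers `x_k` satisfies
`x_{k+1}² ≤ [(1 − A)x_k + C]² + B²` for every `k ≥ 0`, then for all `k ≥ 0`,
`x_k ≤ (1 − A)^k x₀ + C/A + B²/(C + √A · B)`. -/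
theorem recursive_inequality_lemma
    (A B C : ℝ) (hA : 0 < A) (hA1 : A < 1) (hB : 0 ≤ B) (hC : 0 ≤ C)
    (x : ℕ → ℝ) (hx : ∀ k, 0 ≤ x k)
    (hrec : ∀ k : ℕ, (x (k + 1)) ^ 2 ≤ ((1 - A) * x k + C) ^ 2 + B ^ 2) :
    ∀ k : ℕ, x k ≤ (1 - A) ^ k * x 0 + C / A + B ^ 2 / (C + Real.sqrt A * B) := by
  obtain ⟨sA, hsA⟩ : ∃ s, s = Real.sqrt A := ⟨_, rfl⟩
  rw [← hsA]
  have hsA0 : 0 < sA := hsA ▸ Real.sqrt_pos.mpr hA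
  have hsA2 : sA ^ 2 = A := hsA ▸ Real.sq_sqrt hA.le
  obtain ⟨E, hEd⟩ : ∃ E, E = B ^ 2 / (C + sA * B) := ⟨_, rfl⟩
  rw [← hEd]
  have hden0 : 0 ≤ C + sA * B := add_nonneg hC (mul_nonneg hsA0.le hB)
  have hE0 : 0 ≤ E := hEd ▸ div_nonneg (sq_nonneg B) hden0
  have hT0 : 0 ≤ C / A + E := add_nonneg (div_nonneg hC hA.le) hE0
  have h1A : (0:ℝ) < 1 - A := by linarith
  -- key inequality
  have key : ((1 - A) * (C / A + E) + C) ^ 2 + B ^ 2 ≤ (C / A + E) ^ 2 := by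
    rcases eq_or_lt_of_le hden0 with h0 | h0
    · have hB0 : B = 0 := by nlinarith [mul_nonneg hsA0.le hB]
      have hC0 : C = 0 := by nlinarith [mul_nonneg hsA0.le hB]
      have hE0' : E = 0 := by rw [hEd, hB0, hC0]; simp
      rw [hB0, hC0, hE0']
      norm_num
    · have hEdef : E * (C + sA * B) = B ^ 2 := by
        rw [hEd]; exact div_mul_cancel₀ _ h0.ne'
      have hF : (C + A * (2 - A) * E - sA * B) * (C + sA * B)
          = C ^ 2 + A * (1 - A) * B ^ 2 := by
        linear_combination A * (2 - A) * hEdef - B ^ 2 * hsA2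
      have hF0 : 0 ≤ C + A * (2 - A) * E - sA * B := by
        nlinarith [sq_nonneg C, mul_nonneg (mul_nonneg hA.le h1A.le) (sq_nonneg B)]
      have heq : (C / A + E) ^ 2 - ((1 - A) * (C / A + E) + C) ^ 2
          = E * (2 * C + A * (2 - A) * E) := by
        field_simp
        ring
      have h2' : E * (2 * C + A * (2 - A) * E)
          = B ^ 2 + E * (C + A * (2 - A) * E - sA * B) := by
        linear_combination hEdef
      linarith [mul_nonneg hE0 hF0]
  have hAE : A * (C / A + E) - C = A * E := by
    field_simp
    ring
  intro k
  induction k with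
  | zero => simp only [pow_zero, one_mul]; linarith
  | succ k ih =>
    have hm0 : 0 ≤ (1 - A) ^ k * x 0 := mul_nonneg (pow_nonneg h1A.le k) (hx 0)
    have hm0' : 0 ≤ (1 - A) * ((1 - A) ^ k * x 0) := mul_nonneg h1A.le hm0
    have h1 : (x (k + 1)) ^ 2
        ≤ ((1 - A) * ((1 - A) ^ k * x 0 + C / A + E) + C) ^ 2 + B ^ 2 := by
      refine le_trans (hrec k) ?_
      have hxk := hx k
      have ha : (1 - A) * x k + C ≤ (1 - A) * ((1 - A) ^ k * x 0 + C / A + E) + C := by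
        have := mul_le_mul_of_nonneg_left ih h1A.le
        linarith
      have hb : 0 ≤ (1 - A) * x k + C := add_nonneg (mul_nonneg h1A.le hxk) hC
      nlinarith [pow_le_pow_left₀ hb ha 2]
    have h2 : ((1 - A) * ((1 - A) ^ k * x 0 + C / A + E) + C) ^ 2 + B ^ 2
        ≤ ((1 - A) * ((1 - A) ^ k * x 0) + (C / A + E)) ^ 2 := by
      nlinarith [mul_nonneg hm0' (mul_nonneg hA.le hE0)]
    have hrhs0 : 0 ≤ (1 - A) * ((1 - A) ^ k * x 0) + (C / A + E) := by linarith
    have hfin := le_of_pow_le_pow_left₀ two_ne_zero hrhs0 (h1.trans h2)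
    have hpow : (1 - A) * ((1 - A) ^ k * x 0) = (1 - A) ^ (k + 1) * x 0 := by
      rw [pow_succ]; ring
    linarith
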